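/- arXiv:math/0607544 — 2 statements merged into one kernel-verified Lean document; each statement's English description precedes it below -/
import Mathlib

section
/- Let G be a finite directed multigraph with edge set E, and suppose some edges are designated 'external' with the rest 'internal', where each external edge has exactly one endpoint among the vertices of G (its other end is free). For each vertex v let ρ(v) ∈ ℚ^E be the outgoing-minus-incoming edge vector, and for each connected component C of G let ρ(C) ∈ ℚ^E be the signed sum Σ ε_e · e over external edges e of C, with ε_e = +1 if e points out of C and −1 if it points into C. Let V_e ⊆ ℚ^E be the span of the external edge basis vectors and V_c ⊆ ℚ^E the span of {ρ(v) : v a vertex}. Then V_e ∩ V_c is spanned by {ρ(C) : C a connected component of G}. -/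
open scoped Classical

/-- For a finite directed multigraph with some external edges (edges with exactly one
endpoint, encoded by `tail, head : E → Option V` with `none` meaning a free end), the
intersection of the span `V_e` of the external edge basis vectors with the span `V_c` of
the vertex relators `ρ(v)` is spanned by the component vectors `ρ(C)`, the signed sums of
external edges over each connected component. -/
theorem stmt_6 (V E : Type*) [Fintype V] [Fintype E]
    (tail head : E → Option V)
    (hext : ∀ e : E, ¬(tail e = none ∧ head e = none)) :
    -- the outgoing-minus-incoming relator of a vertex
    let ρ : V → (E → ℚ) := fun v e =>
      (if tail e = some v then 1 else 0) - (if head e = some v then 1 else 0)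
    -- reachability via internal edges
    let reach : V → V → Prop := fun u v => Relation.ReflTransGen
      (fun u v => ∃ e : E, (tail e = some u ∧ head e = some v) ∨
        (tail e = some v ∧ head e = some u)) u v
    -- the signed sum of external edges over the connected component of v₀:
    -- +1 for edges pointing out of the component, −1 for edges pointing into it
    let ρC : V → (E → ℚ) := fun v₀ e =>
      (if head e = none ∧ ∃ u, tail e = some u ∧ reach u v₀ then 1 else 0)
        - (if tail e = none ∧ ∃ u, head e = some u ∧ reach u v₀ then 1 else 0)
    Submodule.span ℚ ((fun e => Pi.single e (1 : ℚ)) ''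
        {e : E | tail e = none ∨ head e = none})
      ⊓ Submodule.span ℚ (Set.range ρ)
      = Submodule.span ℚ (Set.range ρC) := by
  intro ρ reach ρC
  classical
  set r : V → V → Prop := fun u v => ∃ e : E, (tail e = some u ∧ head e = some v) ∨
        (tail e = some v ∧ head e = some u) with hr
  have hreach : reach = fun u v => Relation.ReflTransGen r u v := rfl
  have hrsymm : Symmetric r := by
    rintro a b ⟨e, h⟩; exact ⟨e, h.symm⟩
  have hsymm : ∀ u v, reach u v → reach v u := by
    rw [hreach]
    exact fun u v h => have : Std.Symm r := ⟨fun a b h => hrsymm h⟩; (Relation.ReflTransGen.symmetric (r := r)).symm u v h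
  have htrans : ∀ {u v w}, reach u v → reach v w → reach u w := by
    rw [hreach]; exact fun h1 h2 => h1.trans h2
  have hrefl : ∀ v, reach v v := fun v => Relation.ReflTransGen.refl
  set comp : V → Finset V := fun v₀ => Finset.univ.filter (fun u => reach u v₀) with hcomp
  have hmemcomp : ∀ u v₀, u ∈ comp v₀ ↔ reach u v₀ := by
    intro u v₀; simp [hcomp]
  -- key formula: ρC v₀ = ∑ over the component of v₀ of ρ u
  have hA : ∀ v₀, ρC v₀ = ∑ u ∈ comp v₀, ρ u := by
    intro v₀
    funext e
    have hsum : (∑ u ∈ comp v₀, ρ u) e = ∑ u ∈ comp v₀, ρ u e := by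
      simp
    rw [hsum]
    show (if head e = none ∧ ∃ u, tail e = some u ∧ reach u v₀ then (1:ℚ) else 0)
        - (if tail e = none ∧ ∃ u, head e = some u ∧ reach u v₀ then 1 else 0)
      = ∑ u ∈ comp v₀, ((if tail e = some u then (1:ℚ) else 0)
        - (if head e = some u then 1 else 0))
    rw [Finset.sum_sub_distrib]
    rcases h1 : tail e with _ | w <;> rcases h2 : head e with _ | w'
    · exact absurd ⟨h1, h2⟩ (hext e)
    · -- tail none, head some w'
      simp [Finset.sum_ite_eq, hmemcomp]
    · -- tail some w, head none
      simp [Finset.sum_ite_eq, hmemcomp]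
    · -- internal edge
      have hiff : reach w v₀ ↔ reach w' v₀ := by
        have hww' : r w w' := ⟨e, Or.inl ⟨h1, h2⟩⟩
        have hw'w : r w' w := ⟨e, Or.inr ⟨h1, h2⟩⟩
        rw [hreach]
        exact ⟨fun h => Relation.ReflTransGen.head hw'w h,
          fun h => Relation.ReflTransGen.head hww' h⟩
      simp only [Finset.sum_ite_eq, hmemcomp, Option.some.injEq, reduceCtorEq]
      simp [hiff, hmemcomp]
  -- a vector supported on external edges is in the external span
  have hB : ∀ x : E → ℚ, (∀ e, tail e ≠ none → head e ≠ none → x e = 0) →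
      x ∈ Submodule.span ℚ ((fun e => Pi.single e (1 : ℚ)) ''
        {e : E | tail e = none ∨ head e = none}) := by
    intro x hx
    have hxsum : x = ∑ e : E, x e • (Pi.single e (1:ℚ) : E → ℚ) := by
      funext j
      simp [Pi.single_apply, Finset.sum_ite_eq, mul_ite]
    rw [hxsum]
    refine Submodule.sum_mem _ fun e _ => ?_
    by_cases he : tail e = none ∨ head e = none
    · exact Submodule.smul_mem _ _ (Submodule.subset_span ⟨e, he, rfl⟩)
    · push_neg at he
      rw [hx e he.1 he.2, zero_smul]
      exact Submodule.zero_mem _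
  apply le_antisymm
  · rintro x hx
    rw [Submodule.mem_inf] at hx
    obtain ⟨hxe, hxc⟩ := hx
    obtain ⟨c, hc⟩ := (Submodule.mem_span_range_iff_exists_fun ℚ).mp hxc
    -- x vanishes on internal edges
    have hzero : ∀ e, tail e ≠ none → head e ≠ none → x e = 0 := by
      intro e h1 h2
      have hle : Submodule.span ℚ ((fun e => Pi.single e (1 : ℚ)) ''
          {e : E | tail e = none ∨ head e = none}) ≤
          LinearMap.ker (LinearMap.proj (R := ℚ) (φ := fun _ : E => ℚ) e) := by
        rw [Submodule.span_le]
        rintro y ⟨e', he', rfl⟩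
        have hne : e' ≠ e := by
          rintro rfl
          rcases he' with h | h
          exacts [h1 h, h2 h]
        simp [LinearMap.mem_ker, Pi.single_apply, hne.symm]
      exact hle hxe
    have hsum1 : ∀ w : V, ∑ v : V, c v * (if (some w : Option V) = some v then (1:ℚ) else 0)
        = c w := by
      intro w
      simp [mul_ite, Finset.sum_ite_eq]
    -- c is constant on components
    have hstep : ∀ {a b}, r a b → c a = c b := by
      rintro a b ⟨e, h⟩
      have hxe0 : x e = 0 := by
        rcases h with ⟨ht, hh⟩ | ⟨ht, hh⟩ <;>
          exact hzero e (by simp [ht]) (by simp [hh])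
      have key : ∑ v : V, c v * ρ v e = x e := by
        rw [← hc]; simp [Finset.sum_apply]
      have hexp : ∑ v : V, c v * ρ v e
          = ∑ v : V, c v * ((if tail e = some v then (1:ℚ) else 0)
            - (if head e = some v then 1 else 0)) := rfl
      rcases h with ⟨ht, hh⟩ | ⟨ht, hh⟩
      · have : ∑ v : V, c v * ρ v e = c a - c b := by
          rw [hexp]
          simp only [ht, hh]
          rw [Finset.sum_congr rfl (fun v _ => mul_sub (c v) _ _),
            Finset.sum_sub_distrib, hsum1 a, hsum1 b]
        rw [this, hxe0] at key
        linarith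
      · have : ∑ v : V, c v * ρ v e = c b - c a := by
          rw [hexp]
          simp only [ht, hh]
          rw [Finset.sum_congr rfl (fun v _ => mul_sub (c v) _ _),
            Finset.sum_sub_distrib, hsum1 b, hsum1 a]
        rw [this, hxe0] at key
        linarith
    have hconst : ∀ u v, reach u v → c u = c v := by
      rw [hreach]
      intro u v h
      induction h with
      | refl => rfl
      | tail _ hstep' ih => exact ih.trans (hstep hstep')
    have hcompeq : ∀ u v, reach u v → comp u = comp v := by
      intro u v h
      ext w
      simp only [hmemcomp]
      exact ⟨fun hw => htrans hw h, fun hw => htrans hw (hsymm u v h)⟩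
    set N : V → ℚ := fun v => ((comp v).card : ℚ) with hN
    have hNpos : ∀ v, N v ≠ 0 := by
      intro v
      have hv : v ∈ comp v := (hmemcomp v v).mpr (hrefl v)
      have hp : (0:ℚ) < ((comp v).card : ℚ) := by
        exact_mod_cast Finset.card_pos.mpr ⟨v, hv⟩
      exact hp.ne'
    have hx2 : ∑ v : V, (c v / N v) • ρC v = ∑ u : V, c u • ρ u := by
      have h1 : ∀ v : V, (c v / N v) • ρC v
          = ∑ u : V, if reach u v then (c v / N v) • ρ u else 0 := by
        intro v
        rw [hA, Finset.smul_sum]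
        rw [show comp v = Finset.univ.filter (fun u => reach u v) from rfl,
          Finset.sum_filter]
      rw [Finset.sum_congr rfl fun v _ => h1 v, Finset.sum_comm]
      refine Finset.sum_congr rfl fun u _ => ?_
      have h2 : ∀ v : V, (if reach u v then (c v / N v) • ρ u else 0)
          = if reach u v then (c u / N u) • ρ u else 0 := by
        intro v
        split_ifs with h
        · have hcv : c v = c u := hconst v u (hsymm u v h)
          have hNv : N v = N u := by
            show ((comp v).card : ℚ) = ((comp u).card : ℚ)
            rw [hcompeq v u (hsymm u v h)]
          rw [hcv, hNv]
        · rfl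
      rw [Finset.sum_congr rfl fun v _ => h2 v, ← Finset.sum_filter, Finset.sum_const]
      have h3 : Finset.univ.filter (fun v => reach u v) = comp u := by
        ext v
        rw [hmemcomp, Finset.mem_filter]
        simp only [Finset.mem_univ, true_and]
        exact ⟨fun h => hsymm u v h, fun h => hsymm v u h⟩
      rw [h3, ← Nat.cast_smul_eq_nsmul ℚ, smul_smul,
        show ((comp u).card : ℚ) = N u from rfl, mul_comm,
        div_mul_cancel₀ _ (hNpos u)]
    have hxeq : x = ∑ v : V, (c v / N v) • ρC v := by
      rw [hx2, hc]
    rw [hxeq]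
    exact Submodule.sum_mem _ fun v _ =>
      Submodule.smul_mem _ _ (Submodule.subset_span ⟨v, rfl⟩)
  · rw [Submodule.span_le]
    rintro y ⟨v₀, rfl⟩
    rw [SetLike.mem_coe, Submodule.mem_inf]
    refine ⟨hB (ρC v₀) ?_, ?_⟩
    · intro e h1 h2
      show (if head e = none ∧ ∃ u, tail e = some u ∧ reach u v₀ then (1:ℚ) else 0)
        - (if tail e = none ∧ ∃ u, head e = some u ∧ reach u v₀ then 1 else 0) = 0
      rw [if_neg (fun h => h2 h.1), if_neg (fun h => h1 h.1), sub_zero]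
    · rw [hA]
      exact Submodule.sum_mem _ fun u _ => Submodule.subset_span ⟨u, rfl⟩
end

section
/- Let p ∈ ℚ[t] and write p(z) + p(x+y−z) − p(x) − p(y) = (z−x)(z−y)·G(x,y,z) in ℚ[x,y,z]. Then (x−y)·G(x,y,x) = p'(x) − p'(y). Equivalently, G(x,y,x) equals the (polynomial) divided difference of the derivative: G(x,y,x) = (p'(x) − p'(y))/(x−y). -/
open MvPolynomial

/-- If `p(z) + p(x+y−z) − p(x) − p(y) = (z−x)(z−y)·G(x,y,z)` in `ℚ[x,y,z]`, then
`(x−y)·G(x,y,x) = p'(x) − p'(y)`, i.e. `G(x,y,x)` is the divided difference of `p'`. -/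
theorem stmt_13 (p : Polynomial ℚ) (G : MvPolynomial (Fin 3) ℚ)
    (hG : Polynomial.aeval (X 2 : MvPolynomial (Fin 3) ℚ) p
        + Polynomial.aeval (X 0 + X 1 - X 2 : MvPolynomial (Fin 3) ℚ) p
        - Polynomial.aeval (X 0 : MvPolynomial (Fin 3) ℚ) p
        - Polynomial.aeval (X 1 : MvPolynomial (Fin 3) ℚ) p
      = (X 2 - X 0) * (X 2 - X 1) * G) :
    (X 0 - X 1) * aeval ![X 0, X 1, X 0] G
      = Polynomial.aeval (X 0 : MvPolynomial (Fin 3) ℚ) (Polynomial.derivative p)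
        - Polynomial.aeval (X 1 : MvPolynomial (Fin 3) ℚ) (Polynomial.derivative p) := by
  have h := congrArg (fun q : MvPolynomial (Fin 3) ℚ =>
    (aeval ![X 0, X 1, X 0] (pderiv 2 q) : MvPolynomial (Fin 3) ℚ)) hG
  simp only [map_add, map_sub, map_mul, map_one, map_zero, Derivation.map_aeval,
    Derivation.leibniz, pderiv_X_self, pderiv_X_of_ne (show (0:Fin 3) ≠ 2 by decide),
    pderiv_X_of_ne (show (1:Fin 3) ≠ 2 by decide), smul_eq_mul, aeval_X,
    ← Polynomial.aeval_algHom_apply,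
    Matrix.cons_val_zero, Matrix.cons_val_one, Matrix.head_cons, Matrix.cons_val_two,
    Matrix.tail_cons, add_sub_cancel_left] at h
  linear_combination -h
end
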